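/- Let S = {p₁,…,p_m} be a finite set of probability distributions, each on n states with values sorted nonincreasingly, let G_S be the greedy coupling output sequence, let z ≥ 2 be an integer, and let M_S^{1/z} be the distribution obtained by multiplying ∧S with Geom_{1/z}. For any indices i′, j′: if ∑_{k=1}^{j′} G_S(k) < ∑_{k=1}^{i′} M_S^{1/z}(k), then G_S(j′+1) ≥ (z−1)·M_S^{1/z}(i′). -/

import Mathlib

open Finset Real

set_option maxHeartbeats 1000000 in
/-- **Claim 8.**  With `G` the greedy coupling output sequence for `S = {p₁,…,p_m}`,
`M` the sorted value sequence of `∧S`, integer `z ≥ 2`, and `Mz` the nonincreasing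
enumeration (via the bijection `e`) of the multiset
`{M k · (1/z)(1−1/z)^t : k ∈ Fin n, t ∈ ℕ}` (i.e. `M_S^{1/z} = ∧S × Geom_{1/z}`):
for all indices `i', j'` (0-indexed; prefixes of lengths `i'+1` and `j'`),
if `∑_{k=1}^{j'} G k < ∑_{k=1}^{i'+1} Mz k` then `G (j'+1) ≥ (z−1)·Mz i'`
(in 0-indexed form: `(z−1)·Mz i' ≤ G j'`). -/
theorem greedy_geometric_prefix_implies_large_next
    (m n : ℕ) [NeZero m] [NeZero n]
    (p : Fin m → ℕ → Fin n → ℝ)      -- residuals: `p ℓ t` before step `t`; `p ℓ 0 = p_ℓ`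
    (G : ℕ → ℝ)                       -- greedy output sequence
    (M : Fin n → ℝ)                   -- sorted values of ∧S
    (hsort : ∀ ℓ, Antitone (p ℓ 0))
    (hpos : ∀ ℓ k, 0 ≤ p ℓ 0 k)
    (hsum : ∀ ℓ, ∑ k, p ℓ 0 k = 1)
    (hG : ∀ t, G t = univ.inf' univ_nonempty fun ℓ => univ.sup' univ_nonempty (p ℓ t))
    (hstep : ∀ t ℓ, ∃ k, (∀ k', p ℓ t k' ≤ p ℓ t k) ∧
      p ℓ (t + 1) = Function.update (p ℓ t) k (p ℓ t k - G t))
    (hM : ∀ i, M i =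
      (univ.inf' univ_nonempty fun ℓ => ∑ j ∈ Iic i, p ℓ 0 j) - ∑ j ∈ Iio i, M j)
    (z : ℕ) (hz : 2 ≤ z)
    (Mz : ℕ → ℝ) (e : ℕ ≃ Fin n × ℕ)
    (hMz : ∀ i, Mz i = M (e i).1 * ((1 / (z : ℝ)) * (1 - 1 / (z : ℝ)) ^ (e i).2))
    (hMzsort : Antitone Mz) :
    ∀ i' j' : ℕ,
      (∑ k ∈ Finset.range j', G k) < (∑ k ∈ Finset.range (i' + 1), Mz k) →
      ((z : ℝ) - 1) * Mz i' ≤ G j' := by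
  classical
  have hzR : (2:ℝ) ≤ (z:ℝ) := by exact_mod_cast hz
  have hzpos : (0:ℝ) < z := by linarith
  have hznz : (z:ℝ) ≠ 0 := ne_of_gt hzpos
  set γ : ℝ := 1 / z with hγdef
  have hγpos : 0 < γ := by positivity
  have hγlt1 : γ < 1 := by rw [hγdef, div_lt_one hzpos]; linarith
  have hxnn : (0:ℝ) ≤ 1 - γ := by linarith
  have hzγ : (z:ℝ) * γ = 1 := by rw [hγdef]; field_simp
  -- residuals stay nonnegative
  have hpnn : ∀ t ℓ k, 0 ≤ p ℓ t k := by
    intro t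
    induction t with
    | zero => exact fun ℓ k => hpos ℓ k
    | succ t ih =>
      intro ℓ k
      obtain ⟨k₀, hk₀max, hupd⟩ := hstep t ℓ
      rw [hupd]
      rcases eq_or_ne k k₀ with rfl | hne
      · rw [Function.update_self]
        have hGle : G t ≤ p ℓ t k := by
          rw [hG t]
          exact le_trans (inf'_le _ (mem_univ ℓ))
            (sup'_le _ _ fun k' _ => hk₀max k')
        linarith
      · rw [Function.update_of_ne hne]; exact ih ℓ k
  -- greedy output is nonnegative
  have hGnn : ∀ t, 0 ≤ G t := by
    intro t; rw [hG t]
    apply le_inf'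
    intro ℓ _
    exact le_trans (hpnn t ℓ ⟨0, Nat.pos_of_ne_zero (NeZero.ne n)⟩)
      (le_sup' _ (mem_univ _))
  -- residual entries decrease in time
  have hdec : ∀ t ℓ k, p ℓ (t+1) k ≤ p ℓ t k := by
    intro t ℓ k
    obtain ⟨k₀, hk₀max, hupd⟩ := hstep t ℓ
    rw [hupd]
    rcases eq_or_ne k k₀ with rfl | hne
    · rw [Function.update_self]; linarith [hGnn t]
    · rw [Function.update_of_ne hne]
  have hdec0 : ∀ t ℓ k, p ℓ t k ≤ p ℓ 0 k := by
    intro t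
    induction t with
    | zero => exact fun ℓ k => le_refl _
    | succ t ih => exact fun ℓ k => le_trans (hdec t ℓ k) (ih ℓ k)
  -- mass identity
  have hsumt : ∀ t ℓ, ∑ k, p ℓ t k = 1 - ∑ s ∈ Finset.range t, G s := by
    intro t
    induction t with
    | zero => intro ℓ; simp [hsum ℓ]
    | succ t ih =>
      intro ℓ
      obtain ⟨k₀, hk₀max, hupd⟩ := hstep t ℓ
      rw [hupd, Finset.sum_update_of_mem (mem_univ k₀)]
      have hdiff : ∑ k ∈ univ \ {k₀}, p ℓ t k = (∑ k, p ℓ t k) - p ℓ t k₀ := by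
        rw [Finset.sum_sdiff_eq_sub (Finset.subset_univ _), Finset.sum_singleton]
      rw [hdiff, ih ℓ, Finset.sum_range_succ]
      ring
  -- prefix identity for M
  have hMpre : ∀ i : Fin n, ∑ j ∈ Iic i, M j =
      univ.inf' univ_nonempty fun ℓ => ∑ j ∈ Iic i, p ℓ 0 j := by
    intro i
    have hins : ∑ j ∈ Iic i, M j = M i + ∑ j ∈ Iio i, M j := by
      rw [← Finset.Iio_insert, Finset.sum_insert (by simp)]
    rw [hins, hM i]
    ring
  -- lower-set comparison lemma
  have hlowset : ∀ (K : Finset (Fin n)), (∀ k ∈ K, ∀ k', k' ≤ k → k' ∈ K) →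
      ∀ ℓ, ∑ k ∈ K, M k ≤ ∑ k ∈ K, p ℓ 0 k := by
    intro K hK ℓ
    rcases K.eq_empty_or_nonempty with rfl | hne
    · simp
    · have hKeq : K = Iic (K.max' hne) := by
        ext k
        simp only [Finset.mem_Iic]
        exact ⟨fun h => Finset.le_max' K k h, fun h => hK _ (K.max'_mem hne) k h⟩
      rw [hKeq, hMpre]
      exact inf'_le _ (mem_univ ℓ)
  -- argmin lemma: M i ≥ p ℓ* 0 i
  have hMargmin : ∀ i : Fin n, ∃ ℓ,
      (univ.inf' univ_nonempty fun ℓ' => ∑ j ∈ Iic i, p ℓ' 0 j) = ∑ j ∈ Iic i, p ℓ 0 j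
      ∧ p ℓ 0 i ≤ M i := by
    intro i
    obtain ⟨ℓ, -, hℓ⟩ := Finset.exists_mem_eq_inf' univ_nonempty
      (fun ℓ' => ∑ j ∈ Iic i, p ℓ' 0 j)
    refine ⟨ℓ, hℓ, ?_⟩
    have h1 : ∑ j ∈ Iio i, M j ≤ ∑ j ∈ Iio i, p ℓ 0 j := by
      refine hlowset _ (fun k hk k' hk' => ?_) ℓ
      simp only [Finset.mem_Iio] at *
      exact lt_of_le_of_lt hk' hk
    have h2 : M i = (∑ j ∈ Iic i, p ℓ 0 j) - ∑ j ∈ Iio i, M j := by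
      rw [hM i, hℓ]
    have h3 : ∑ j ∈ Iic i, p ℓ 0 j = p ℓ 0 i + ∑ j ∈ Iio i, p ℓ 0 j := by
      rw [← Finset.Iio_insert, Finset.sum_insert (by simp)]
    linarith
  have hMnn : ∀ i, 0 ≤ M i := by
    intro i
    obtain ⟨ℓ, -, h⟩ := hMargmin i
    exact le_trans (hpos ℓ i) h
  -- M is antitone
  have hMadj : ∀ (i : Fin n) (h : (i:ℕ)+1 < n), M ⟨(i:ℕ)+1, h⟩ ≤ M i := by
    intro i h
    obtain ⟨ℓ, hℓ, hpM⟩ := hMargmin i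
    have hIic : Iic (⟨(i:ℕ)+1, h⟩ : Fin n) = insert ⟨(i:ℕ)+1, h⟩ (Iic i) := by
      ext j
      simp only [Finset.mem_Iic, Finset.mem_insert, Fin.le_def, Fin.ext_iff]
      omega
    have hIio : Iio (⟨(i:ℕ)+1, h⟩ : Fin n) = Iic i := by
      ext j
      simp only [Finset.mem_Iio, Finset.mem_Iic, Fin.lt_def, Fin.le_def]
      omega
    have hval : M ⟨(i:ℕ)+1, h⟩ =
        (univ.inf' univ_nonempty fun ℓ' => ∑ j ∈ Iic (⟨(i:ℕ)+1, h⟩ : Fin n), p ℓ' 0 j)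
          - ∑ j ∈ Iic i, M j := by
      rw [hM ⟨(i:ℕ)+1, h⟩, hIio]
    have hle1 : (univ.inf' univ_nonempty fun ℓ' => ∑ j ∈ Iic (⟨(i:ℕ)+1, h⟩ : Fin n), p ℓ' 0 j)
        ≤ ∑ j ∈ Iic (⟨(i:ℕ)+1, h⟩ : Fin n), p ℓ 0 j := inf'_le _ (mem_univ ℓ)
    have hsumsplit : ∑ j ∈ Iic (⟨(i:ℕ)+1, h⟩ : Fin n), p ℓ 0 j
        = p ℓ 0 ⟨(i:ℕ)+1, h⟩ + ∑ j ∈ Iic i, p ℓ 0 j := by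
      rw [hIic, Finset.sum_insert (by simp [Fin.lt_def] )]
    have hMi : ∑ j ∈ Iic i, M j = ∑ j ∈ Iic i, p ℓ 0 j := by
      rw [hMpre i, hℓ]
    have hmono : p ℓ 0 ⟨(i:ℕ)+1, h⟩ ≤ p ℓ 0 i := hsort ℓ (by simp [Fin.le_def])
    linarith
  have hManti : ∀ (k k' : Fin n), k ≤ k' → M k' ≤ M k := by
    have key : ∀ (d : ℕ) (k : Fin n) (h : (k:ℕ) + d < n), M ⟨(k:ℕ)+d, h⟩ ≤ M k := by
      intro d
      induction d with
      | zero =>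
        intro k h
        exact le_of_eq (congrArg M (Fin.ext (by simp)))
      | succ d ih =>
        intro k h
        have hd : (k:ℕ) + d < n := by omega
        have h2 := hMadj ⟨(k:ℕ)+d, hd⟩ (by show (k:ℕ)+d+1 < n; omega)
        have h3 : M ⟨(k:ℕ)+(d+1), h⟩ ≤ M ⟨(k:ℕ)+d, hd⟩ := by
          refine le_trans (le_of_eq (congrArg M (Fin.ext ?_))) h2
          simp
          omega
        exact le_trans h3 (ih k hd)
    intro k k' hk
    have hk'eq : k' = ⟨(k:ℕ) + ((k':ℕ) - (k:ℕ)), by omega⟩ := by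
      apply Fin.ext
      simp only []
      have : (k:ℕ) ≤ (k':ℕ) := hk
      omega
    rw [hk'eq]
    exact key _ k _
  -- main argument
  intro i' j' hlt
  rcases le_or_gt (Mz i') 0 with ha0 | ha
  · calc ((z:ℝ)-1) * Mz i' ≤ 0 := mul_nonpos_of_nonneg_of_nonpos (by linarith) ha0
      _ ≤ G j' := hGnn j'
  by_contra hcon
  push_neg at hcon
  set a := Mz i' with hadef
  -- find an index beyond which Mz drops below a
  obtain ⟨i₁, hi₁⟩ : ∃ i₁, Mz i₁ < a := by
    set Mmax := univ.sup' univ_nonempty M with hMm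
    have hMmnn : (0:ℝ) ≤ Mmax :=
      le_trans (hMnn ⟨0, Nat.pos_of_ne_zero (NeZero.ne n)⟩) (le_sup' _ (mem_univ _))
    obtain ⟨t₀, ht₀⟩ := exists_pow_lt_of_lt_one
      (show (0:ℝ) < a / (Mmax * γ + 1) by positivity) (show 1 - γ < 1 by linarith)
    refine ⟨e.symm (⟨0, Nat.pos_of_ne_zero (NeZero.ne n)⟩, t₀), ?_⟩
    rw [hMz, Equiv.apply_symm_apply]
    have hp1 : (0:ℝ) ≤ (1-γ) ^ t₀ := pow_nonneg hxnn _
    have h1 : M (⟨0, Nat.pos_of_ne_zero (NeZero.ne n)⟩ : Fin n) * (γ * (1-γ)^t₀)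
        ≤ Mmax * γ * (1-γ)^t₀ := by
      have hle := le_sup' M (mem_univ (⟨0, Nat.pos_of_ne_zero (NeZero.ne n)⟩ : Fin n))
      rw [← hMm] at hle
      calc M (⟨0, Nat.pos_of_ne_zero (NeZero.ne n)⟩ : Fin n) * (γ * (1-γ)^t₀)
          ≤ Mmax * (γ * (1-γ)^t₀) := mul_le_mul_of_nonneg_right hle (by positivity)
        _ = Mmax * γ * (1-γ)^t₀ := by ring
    have h2 : Mmax * γ * (1-γ)^t₀ ≤ (Mmax * γ + 1) * (1-γ)^t₀ := by nlinarith
    have h3 : (Mmax * γ + 1) * (1-γ)^t₀ < a := by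
      have hpos' : (0:ℝ) < Mmax * γ + 1 := by positivity
      calc (Mmax * γ + 1) * (1-γ)^t₀ < (Mmax * γ + 1) * (a / (Mmax * γ + 1)) :=
            mul_lt_mul_of_pos_left ht₀ hpos'
        _ = a := by field_simp
    calc M (⟨0, Nat.pos_of_ne_zero (NeZero.ne n)⟩ : Fin n) * (γ * (1-γ)^t₀)
        ≤ Mmax * γ * (1-γ)^t₀ := h1
      _ ≤ (Mmax * γ + 1) * (1-γ)^t₀ := h2
      _ < a := h3
  -- the set of indices with Mz ≥ a
  set Sf := (Finset.range (i₁+1)).filter (fun i => a ≤ Mz i) with hSf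
  have hSmem : ∀ i, i ∈ Sf ↔ a ≤ Mz i := by
    intro i
    simp only [hSf, Finset.mem_filter, Finset.mem_range]
    constructor
    · exact fun h => h.2
    · intro h
      refine ⟨?_, h⟩
      by_contra hgt
      push_neg at hgt
      exact absurd (le_trans h (hMzsort (by omega : i₁ ≤ i))) (not_le.mpr hi₁)
  have hSlow : ∀ x ∈ Sf, ∀ y, y ≤ x → y ∈ Sf := fun x hx y hy =>
    (hSmem y).2 (le_trans ((hSmem x).1 hx) (hMzsort hy))
  set N := Sf.card with hN
  have hSrange : Sf = Finset.range N := by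
    ext x
    simp only [Finset.mem_range]
    constructor
    · intro hx
      have hsub : Finset.range (x+1) ⊆ Sf := fun y hy =>
        hSlow x hx y (by simpa [Nat.lt_succ_iff] using hy)
      have hcard := Finset.card_le_card hsub
      rw [Finset.card_range] at hcard
      omega
    · intro hx
      by_contra hxs
      have hsub : Sf ⊆ Finset.range x := by
        intro y hy
        simp only [Finset.mem_range]
        by_contra hyx
        push_neg at hyx
        exact hxs (hSlow y hy x hyx)
      have hcard := Finset.card_le_card hsub
      rw [Finset.card_range] at hcard
      omega
  have hi'N : i' < N := by
    have : i' ∈ Sf := (hSmem i').2 (le_refl a)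
    rw [hSrange, Finset.mem_range] at this
    exact this
  -- the lower set K of big coordinates
  set K := univ.filter (fun k : Fin n => (z:ℝ) * a ≤ M k) with hKdef
  have hKlow : ∀ k ∈ K, ∀ k', k' ≤ k → k' ∈ K := by
    intro k hk k' hk'
    simp only [hKdef, Finset.mem_filter, Finset.mem_univ, true_and] at hk ⊢
    exact le_trans hk (hManti k' k hk')
  -- step 1
  have h1 : ∑ k ∈ Finset.range (i'+1), Mz k ≤ ∑ k ∈ Finset.range N, Mz k := by
    apply Finset.sum_le_sum_of_subset_of_nonneg (Finset.range_subset_range.mpr (by omega))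
    intro i hiN _
    have : i ∈ Sf := by rw [hSrange]; exact hiN
    exact le_trans (le_of_lt ha) ((hSmem i).1 this)
  -- step 2 : geometric series bound
  have h2 : ∑ i ∈ Finset.range N, Mz i ≤ ∑ k ∈ K, (M k - ((z:ℝ)-1) * a) := by
    set E := (Finset.range N).image e with hE
    have hEval : ∀ q ∈ E, a ≤ M q.1 * (γ * (1-γ)^q.2) := by
      intro q hq
      obtain ⟨i, hi, rfl⟩ := Finset.mem_image.mp hq
      have hiS : i ∈ Sf := by rw [hSrange]; exact hi
      have := (hSmem i).1 hiS
      rwa [hMz i] at this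
    have hsumE : ∑ i ∈ Finset.range N, Mz i = ∑ q ∈ E, M q.1 * (γ * (1-γ)^q.2) := by
      rw [hE, Finset.sum_image (fun x _ y _ h => e.injective h)]
      exact Finset.sum_congr rfl fun i _ => hMz i
    rw [hsumE, ← Finset.sum_fiberwise E (fun q => q.1) (fun q => M q.1 * (γ * (1-γ)^q.2)),
      hKdef, Finset.sum_filter]
    apply Finset.sum_le_sum
    intro k _
    have hsumEk : ∑ q ∈ E.filter (fun q => q.1 = k), M q.1 * (γ * (1-γ)^q.2)
        = ∑ q ∈ E.filter (fun q => q.1 = k), M k * (γ * (1-γ)^q.2) :=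
      Finset.sum_congr rfl fun q hq => by rw [(Finset.mem_filter.mp hq).2]
    rw [hsumEk]
    rcases (E.filter (fun q => q.1 = k)).eq_empty_or_nonempty with hemp | hne
    · rw [hemp, Finset.sum_empty]
      split
      · next hza => nlinarith [hMnn k]
      · exact le_refl 0
    · set T := (E.filter (fun q => q.1 = k)).image Prod.snd with hT
      have hTne : T.Nonempty := hne.image _
      set τ := T.max' hTne with hτ
      obtain ⟨q₀, hq₀, hq₀2⟩ := Finset.mem_image.mp (T.max'_mem hTne)
      have hq₀E : q₀ ∈ E := (Finset.mem_filter.mp hq₀).1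
      have hq₀1 : q₀.1 = k := (Finset.mem_filter.mp hq₀).2
      have hval : a ≤ M k * (γ * (1-γ)^τ) := by
        have := hEval q₀ hq₀E
        rwa [hq₀1, hq₀2] at this
      have hMk : (z:ℝ) * a ≤ M k := by
        have hpow1 : (1-γ)^τ ≤ 1 := pow_le_one₀ hxnn (by linarith)
        have hle : M k * (γ * (1-γ)^τ) ≤ M k * γ := by
          have h4 : γ * (1-γ)^τ ≤ γ * 1 := mul_le_mul_of_nonneg_left hpow1 hγpos.le
          rw [mul_one] at h4
          exact mul_le_mul_of_nonneg_left h4 (hMnn k)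
        have haγ : a ≤ M k * γ := le_trans hval hle
        calc (z:ℝ) * a ≤ (z:ℝ) * (M k * γ) :=
              mul_le_mul_of_nonneg_left haγ (by linarith)
          _ = M k := by rw [show (z:ℝ) * (M k * γ) = M k * ((z:ℝ) * γ) by ring, hzγ, mul_one]
      rw [if_pos hMk]
      have hsub : T ⊆ Finset.range (τ+1) := fun t ht =>
        Finset.mem_range.mpr (Nat.lt_succ_of_le (T.le_max' t ht))
      have hsumT : ∑ q ∈ E.filter (fun q => q.1 = k), M k * (γ * (1-γ)^q.2)
          = ∑ t ∈ T, M k * (γ * (1-γ)^t) := by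
        rw [hT, Finset.sum_image]
        intro x hx y hy hxy
        have hx1 : x.1 = k := (Finset.mem_filter.mp hx).2
        have hy1 : y.1 = k := (Finset.mem_filter.mp hy).2
        exact Prod.ext (hx1.trans hy1.symm) hxy
      have hnnterm : ∀ t : ℕ, 0 ≤ M k * (γ * (1-γ)^t) := by
        intro t
        have := hMnn k
        positivity
      have hγne : γ ≠ 0 := ne_of_gt hγpos
      have hne1 : (1:ℝ) - γ ≠ 1 := by
        intro hc
        have : γ = 0 := by linarith
        exact hγne this
      have hgeomsum : ∑ t ∈ Finset.range (τ+1), (1-γ)^t = (1 - (1-γ)^(τ+1)) / γ := by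
        rw [geom_sum_eq hne1, show (1:ℝ) - γ - 1 = -γ by ring, div_neg, ← neg_div, neg_sub]
      have hgeom : ∑ t ∈ Finset.range (τ+1), M k * (γ * (1-γ)^t)
          = M k * (1 - (1-γ)^(τ+1)) := by
        have hfac : ∑ t ∈ Finset.range (τ+1), M k * (γ * (1-γ)^t)
            = (M k * γ) * ∑ t ∈ Finset.range (τ+1), (1-γ)^t := by
          rw [Finset.mul_sum]
          exact Finset.sum_congr rfl fun t _ => by ring
        rw [hfac, hgeomsum]
        field_simp
      have hfinal : M k * (1 - (1-γ)^(τ+1)) ≤ M k - ((z:ℝ)-1) * a := by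
        have h5 : (z:ℝ) * a ≤ M k * (1-γ)^τ := by
          have := mul_le_mul_of_nonneg_left hval (by linarith : (0:ℝ) ≤ (z:ℝ))
          calc (z:ℝ) * a ≤ (z:ℝ) * (M k * (γ * (1-γ)^τ)) := this
            _ = M k * (1-γ)^τ * ((z:ℝ) * γ) := by ring
            _ = M k * (1-γ)^τ := by rw [hzγ, mul_one]
        have h6 : ((z:ℝ)-1) * a ≤ M k * (1-γ)^(τ+1) := by
          have h7 : (z:ℝ) * a * (1-γ) ≤ M k * (1-γ)^τ * (1-γ) :=
            mul_le_mul_of_nonneg_right h5 hxnn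
          have h8 : (z:ℝ) * a * (1-γ) = (z:ℝ) * a - a := by
            rw [show (z:ℝ) * a * (1-γ) = (z:ℝ) * a - a * ((z:ℝ) * γ) by ring, hzγ, mul_one]
          have h9 : M k * (1-γ)^τ * (1-γ) = M k * (1-γ)^(τ+1) := by ring
          linarith
        have hexp : M k * (1 - (1-γ)^(τ+1)) = M k - M k * (1-γ)^(τ+1) := by ring
        linarith
      calc ∑ q ∈ E.filter (fun q => q.1 = k), M k * (γ * (1-γ)^q.2)
          = ∑ t ∈ T, M k * (γ * (1-γ)^t) := hsumT
        _ ≤ ∑ t ∈ Finset.range (τ+1), M k * (γ * (1-γ)^t) :=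
            Finset.sum_le_sum_of_subset_of_nonneg hsub (fun t _ _ => hnnterm t)
        _ = M k * (1 - (1-γ)^(τ+1)) := hgeom
        _ ≤ M k - ((z:ℝ)-1) * a := hfinal
  -- step 3 : greedy side
  have hinf : univ.inf' univ_nonempty (fun ℓ => univ.sup' univ_nonempty (p ℓ j'))
      < ((z:ℝ)-1) * a := by
    rw [← hG j']; exact hcon
  obtain ⟨ℓ, -, hℓ⟩ := (Finset.inf'_lt_iff univ_nonempty).mp hinf
  have hsmall : ∀ k, p ℓ j' k < ((z:ℝ)-1) * a := fun k =>
    lt_of_le_of_lt (le_sup' _ (mem_univ k)) hℓ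
  have h3 : ∑ k ∈ K, (M k - ((z:ℝ)-1) * a) ≤ ∑ t ∈ Finset.range j', G t := by
    have e1 : ∑ t ∈ Finset.range j', G t = ∑ k, (p ℓ 0 k - p ℓ j' k) := by
      rw [Finset.sum_sub_distrib, hsum ℓ, hsumt j' ℓ]
      ring
    rw [e1]
    calc ∑ k ∈ K, (M k - ((z:ℝ)-1) * a)
        ≤ ∑ k ∈ K, (p ℓ 0 k - ((z:ℝ)-1) * a) := by
          rw [Finset.sum_sub_distrib, Finset.sum_sub_distrib]
          have := hlowset K hKlow ℓ
          linarith
      _ ≤ ∑ k ∈ K, (p ℓ 0 k - p ℓ j' k) :=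
          Finset.sum_le_sum fun k _ => by linarith [hsmall k]
      _ ≤ ∑ k, (p ℓ 0 k - p ℓ j' k) :=
          Finset.sum_le_sum_of_subset_of_nonneg (Finset.filter_subset _ _)
            (fun k _ _ => by linarith [hdec0 j' ℓ k])
  linarith
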